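/- Let S be a nontrivial commutative entire antinegative semiring and n ≥ 3. Then the diameter of the commuting graph Γ(M_n(S)) is at least 4. -/

import Mathlib

/-- The commuting graph of the semiring of `n × n` matrices over `R`: vertices are the
noncentral matrices, and two distinct vertices are adjacent iff they commute. -/
def commGraph (R : Type*) [Semiring R] (n : ℕ) :
    SimpleGraph {X : Matrix (Fin n) (Fin n) R // ¬ ∀ Y, X * Y = Y * X} where
  Adj X Y := X ≠ Y ∧ X.1 * Y.1 = Y.1 * X.1
  symm := ⟨fun _ _ h => ⟨fun e => h.1 e.symm, h.2.symm⟩⟩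
  loopless := ⟨fun _ h => h.1 rfl⟩

section CG
variable {S : Type*} [CommSemiring S]

private def matA (S : Type*) [CommSemiring S] (n : ℕ) : Matrix (Fin n) (Fin n) S :=
  fun i j => if ((i : ℕ) = 0 ∧ (j : ℕ) = 0) ∨ ((j : ℕ) = (i : ℕ) + 1) then 1 else 0

private def matB (S : Type*) [CommSemiring S] (n : ℕ) : Matrix (Fin n) (Fin n) S :=
  fun i j => if ((i : ℕ) = 0 ∧ (j : ℕ) = 0) ∨ (((j : ℕ) = (i : ℕ) + 1) ∧ (i : ℕ) ≠ 0)
      ∨ ((i : ℕ) = n - 1 ∧ (j : ℕ) = 0) then 1 else 0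

private lemma sum_single {n : ℕ} (f : Fin n → S) (k₀ : Fin n)
    (h : ∀ k, k ≠ k₀ → f k = 0) : (∑ k, f k) = f k₀ :=
  Finset.sum_eq_single k₀ (fun b _ hb => h b hb) (fun h' => absurd (Finset.mem_univ k₀) h')

private lemma sum_pair' {n : ℕ} (f : Fin n → S) (k₀ k₁ : Fin n) (hne : k₀ ≠ k₁)
    (h : ∀ k, k ≠ k₀ → k ≠ k₁ → f k = 0) : (∑ k, f k) = f k₀ + f k₁ := by
  rw [← Finset.sum_pair hne]
  refine (Finset.sum_subset (Finset.subset_univ _) (fun x _ hx => ?_)).symm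
  simp only [Finset.mem_insert, Finset.mem_singleton, not_or] at hx
  exact h x hx.1 hx.2

private lemma fin_ne {n : ℕ} {k : Fin n} {m : ℕ} (hm : m < n) (h : k ≠ ⟨m, hm⟩) :
    (k : ℕ) ≠ m := fun hv => h (Fin.ext hv)

-- (X * A) entries
private lemma mulA_col0 {n : ℕ} (X : Matrix (Fin n) (Fin n) S) (i j : Fin n)
    (hj : (j : ℕ) = 0) : (X * matA S n) i j = X i j := by
  rw [Matrix.mul_apply, sum_single (fun k => X i k * matA S n k j) j (fun k hk => by
    have hk' : (k : ℕ) ≠ 0 := fun h0 => hk (Fin.ext (by omega))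
    have hz : matA S n k j = 0 := by simp only [matA]; rw [if_neg]; omega
    simp only [hz, mul_zero])]
  have h1 : matA S n j j = 1 := by unfold matA; rw [if_pos]; omega
  simp only [h1, mul_one]

private lemma mulA_colsucc {n : ℕ} (X : Matrix (Fin n) (Fin n) S) (i j : Fin n)
    (hj : (j : ℕ) ≠ 0) :
    (X * matA S n) i j = X i ⟨(j : ℕ) - 1, by have := j.isLt; omega⟩ := by
  have hb : (j : ℕ) - 1 < n := by have := j.isLt; omega
  rw [Matrix.mul_apply, sum_single (fun k => X i k * matA S n k j) ⟨(j : ℕ) - 1, hb⟩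
    (fun k hk => by
      have hk' : (k : ℕ) ≠ (j : ℕ) - 1 := fin_ne hb hk
      have hz : matA S n k j = 0 := by simp only [matA]; rw [if_neg]; omega
      simp only [hz, mul_zero])]
  have h1 : matA S n ⟨(j : ℕ) - 1, hb⟩ j = 1 := by
    unfold matA; rw [if_pos]; simp only [Fin.val_mk, eq_self_iff_true, true_and, and_true, or_true, true_or] <;> omega
  simp only [h1, mul_one]

-- (A * X) entries
private lemma mulA_row0 {n : ℕ} (hn : 3 ≤ n) (X : Matrix (Fin n) (Fin n) S) (i j : Fin n)
    (hi : (i : ℕ) = 0) :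
    (matA S n * X) i j = X ⟨0, by omega⟩ j + X ⟨1, by omega⟩ j := by
  rw [Matrix.mul_apply, sum_pair' (fun k => matA S n i k * X k j) ⟨0, by omega⟩ ⟨1, by omega⟩
    (Fin.ne_of_val_ne (show (0 : ℕ) ≠ 1 by omega))
    (fun k hk0 hk1 => by
      have h0 : (k : ℕ) ≠ 0 := fin_ne (by omega) hk0
      have h1 : (k : ℕ) ≠ 1 := fin_ne (by omega) hk1
      have hz : matA S n i k = 0 := by simp only [matA]; rw [if_neg]; omega
      simp only [hz, zero_mul])]
  have e0 : matA S n i ⟨0, by omega⟩ = 1 := by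
    unfold matA; rw [if_pos]; simp only [Fin.val_mk, eq_self_iff_true, true_and, and_true, or_true, true_or] <;> omega
  have e1 : matA S n i ⟨1, by omega⟩ = 1 := by
    unfold matA; rw [if_pos]; simp only [Fin.val_mk, eq_self_iff_true, true_and, and_true, or_true, true_or] <;> omega
  simp only [e0, e1, one_mul]

private lemma mulA_rowmid {n : ℕ} (X : Matrix (Fin n) (Fin n) S) (i j : Fin n)
    (hi1 : 1 ≤ (i : ℕ)) (hi2 : (i : ℕ) ≤ n - 2) :
    (matA S n * X) i j = X ⟨(i : ℕ) + 1, by have := i.isLt; omega⟩ j := by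
  have hb : (i : ℕ) + 1 < n := by have := i.isLt; omega
  rw [Matrix.mul_apply, sum_single (fun k => matA S n i k * X k j) ⟨(i : ℕ) + 1, hb⟩
    (fun k hk => by
      have hk' : (k : ℕ) ≠ (i : ℕ) + 1 := fin_ne hb hk
      have hz : matA S n i k = 0 := by simp only [matA]; rw [if_neg]; omega
      simp only [hz, zero_mul])]
  have h1 : matA S n i ⟨(i : ℕ) + 1, hb⟩ = 1 := by
    unfold matA; rw [if_pos]; simp only [Fin.val_mk, eq_self_iff_true, true_and, and_true, or_true, true_or] <;> omega
  simp only [h1, one_mul]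

private lemma mulA_rowlast {n : ℕ} (hn : 3 ≤ n) (X : Matrix (Fin n) (Fin n) S) (i j : Fin n)
    (hi : (i : ℕ) = n - 1) : (matA S n * X) i j = 0 := by
  rw [Matrix.mul_apply]
  refine Finset.sum_eq_zero (fun k _ => ?_)
  have hk := k.isLt
  have hz : matA S n i k = 0 := by simp only [matA]; rw [if_neg]; omega
  simp only [hz, zero_mul]

-- (Y * B) entries
private lemma mulB_col0 {n : ℕ} (hn : 3 ≤ n) (Y : Matrix (Fin n) (Fin n) S) (i j : Fin n)
    (hj : (j : ℕ) = 0) :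
    (Y * matB S n) i j = Y i ⟨0, by omega⟩ + Y i ⟨n - 1, by omega⟩ := by
  rw [Matrix.mul_apply, sum_pair' (fun k => Y i k * matB S n k j) ⟨0, by omega⟩ ⟨n - 1, by omega⟩
    (Fin.ne_of_val_ne (show (0 : ℕ) ≠ n - 1 by omega))
    (fun k hk0 hk1 => by
      have h0 : (k : ℕ) ≠ 0 := fin_ne (by omega) hk0
      have h1 : (k : ℕ) ≠ n - 1 := fin_ne (by omega) hk1
      have hz : matB S n k j = 0 := by simp only [matB]; rw [if_neg]; omega
      simp only [hz, mul_zero])]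
  have e0 : matB S n ⟨0, by omega⟩ j = 1 := by
    unfold matB; rw [if_pos]; simp only [Fin.val_mk, eq_self_iff_true, true_and, and_true, or_true, true_or] <;> omega
  have e1 : matB S n ⟨n - 1, by omega⟩ j = 1 := by
    unfold matB; rw [if_pos]; simp only [Fin.val_mk, eq_self_iff_true, true_and, and_true, or_true, true_or] <;> omega
  simp only [e0, e1, mul_one]

private lemma mulB_col1 {n : ℕ} (Y : Matrix (Fin n) (Fin n) S) (i j : Fin n)
    (hj : (j : ℕ) = 1) : (Y * matB S n) i j = 0 := by
  rw [Matrix.mul_apply]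
  refine Finset.sum_eq_zero (fun k _ => ?_)
  have hz : matB S n k j = 0 := by simp only [matB]; rw [if_neg]; omega
  simp only [hz, mul_zero]

private lemma mulB_colsucc {n : ℕ} (Y : Matrix (Fin n) (Fin n) S) (i j : Fin n)
    (hj : 2 ≤ (j : ℕ)) :
    (Y * matB S n) i j = Y i ⟨(j : ℕ) - 1, by have := j.isLt; omega⟩ := by
  have hb : (j : ℕ) - 1 < n := by have := j.isLt; omega
  rw [Matrix.mul_apply, sum_single (fun k => Y i k * matB S n k j) ⟨(j : ℕ) - 1, hb⟩
    (fun k hk => by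
      have hk' : (k : ℕ) ≠ (j : ℕ) - 1 := fin_ne hb hk
      have hz : matB S n k j = 0 := by simp only [matB]; rw [if_neg]; omega
      simp only [hz, mul_zero])]
  have h1 : matB S n ⟨(j : ℕ) - 1, hb⟩ j = 1 := by
    unfold matB; rw [if_pos]; simp only [Fin.val_mk, eq_self_iff_true, true_and, and_true, or_true, true_or] <;> omega
  simp only [h1, mul_one]

-- (B * Y) entries
private lemma mulB_row0 {n : ℕ} (hn : 3 ≤ n) (Y : Matrix (Fin n) (Fin n) S) (i j : Fin n)
    (hi : (i : ℕ) = 0) : (matB S n * Y) i j = Y ⟨0, by omega⟩ j := by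
  rw [Matrix.mul_apply, sum_single (fun k => matB S n i k * Y k j) ⟨0, by omega⟩
    (fun k hk => by
      have hk' : (k : ℕ) ≠ 0 := fin_ne (by omega) hk
      have hz : matB S n i k = 0 := by simp only [matB]; rw [if_neg]; omega
      simp only [hz, zero_mul])]
  have h1 : matB S n i ⟨0, by omega⟩ = 1 := by
    unfold matB; rw [if_pos]; simp only [Fin.val_mk, eq_self_iff_true, true_and, and_true, or_true, true_or] <;> omega
  simp only [h1, one_mul]

private lemma mulB_rowmid {n : ℕ} (Y : Matrix (Fin n) (Fin n) S) (i j : Fin n)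
    (hi1 : 1 ≤ (i : ℕ)) (hi2 : (i : ℕ) ≤ n - 2) :
    (matB S n * Y) i j = Y ⟨(i : ℕ) + 1, by have := i.isLt; omega⟩ j := by
  have hb : (i : ℕ) + 1 < n := by have := i.isLt; omega
  rw [Matrix.mul_apply, sum_single (fun k => matB S n i k * Y k j) ⟨(i : ℕ) + 1, hb⟩
    (fun k hk => by
      have hk' : (k : ℕ) ≠ (i : ℕ) + 1 := fin_ne hb hk
      have hik := i.isLt
      have hz : matB S n i k = 0 := by simp only [matB]; rw [if_neg]; omega
      simp only [hz, zero_mul])]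
  have h1 : matB S n i ⟨(i : ℕ) + 1, hb⟩ = 1 := by
    unfold matB; rw [if_pos]; simp only [Fin.val_mk, eq_self_iff_true, true_and, and_true, or_true, true_or] <;> omega
  simp only [h1, one_mul]

private lemma mulB_rowlast {n : ℕ} (hn : 3 ≤ n) (Y : Matrix (Fin n) (Fin n) S) (i j : Fin n)
    (hi : (i : ℕ) = n - 1) : (matB S n * Y) i j = Y ⟨0, by omega⟩ j := by
  rw [Matrix.mul_apply, sum_single (fun k => matB S n i k * Y k j) ⟨0, by omega⟩
    (fun k hk => by
      have hk' : (k : ℕ) ≠ 0 := fin_ne (by omega) hk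
      have hkl := k.isLt
      have hz : matB S n i k = 0 := by simp only [matB]; rw [if_neg]; omega
      simp only [hz, zero_mul])]
  have h1 : matB S n i ⟨0, by omega⟩ = 1 := by
    unfold matB; rw [if_pos]; simp only [Fin.val_mk, eq_self_iff_true, true_and, and_true, or_true, true_or] <;> omega
  simp only [h1, one_mul]

end CG
section CG2
variable {S : Type*} [CommSemiring S]

private lemma entry_eq {n : ℕ} {M N : Matrix (Fin n) (Fin n) S} (h : M = N) (i j : Fin n) :
    M i j = N i j := by rw [h]

private lemma X_congr {n : ℕ} (X : Matrix (Fin n) (Fin n) S) {i j i' j' : Fin n}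
    (hi : (i : ℕ) = (i' : ℕ)) (hj : (j : ℕ) = (j' : ℕ)) : X i j = X i' j' := by
  rw [show i = i' from Fin.ext hi, show j = j' from Fin.ext hj]

private lemma mulA_colsucc' {n : ℕ} (X : Matrix (Fin n) (Fin n) S) (i j : Fin n)
    (m : ℕ) (hm : m < n) (hj : (j : ℕ) = m + 1) :
    (X * matA S n) i j = X i ⟨m, hm⟩ :=
  (mulA_colsucc X i j (by omega)).trans (X_congr X rfl (show (j : ℕ) - 1 = m by omega))

private lemma mulA_rowmid' {n : ℕ} (X : Matrix (Fin n) (Fin n) S) (i j : Fin n)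
    (m : ℕ) (hm : m + 1 < n) (hi : (i : ℕ) = m) (h1 : 1 ≤ m) (h2 : m ≤ n - 2) :
    (matA S n * X) i j = X ⟨m + 1, hm⟩ j :=
  (mulA_rowmid X i j (by omega) (by omega)).trans
    (X_congr X (show (i : ℕ) + 1 = m + 1 by omega) rfl)

private lemma mulB_colsucc' {n : ℕ} (Y : Matrix (Fin n) (Fin n) S) (i j : Fin n)
    (m : ℕ) (hm : m < n) (h1 : 1 ≤ m) (hj : (j : ℕ) = m + 1) :
    (Y * matB S n) i j = Y i ⟨m, hm⟩ :=
  (mulB_colsucc Y i j (by omega)).trans (X_congr Y rfl (show (j : ℕ) - 1 = m by omega))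

private lemma mulB_rowmid' {n : ℕ} (Y : Matrix (Fin n) (Fin n) S) (i j : Fin n)
    (m : ℕ) (hm : m + 1 < n) (hi : (i : ℕ) = m) (h1 : 1 ≤ m) (h2 : m ≤ n - 2) :
    (matB S n * Y) i j = Y ⟨m + 1, hm⟩ j :=
  (mulB_rowmid Y i j (by omega) (by omega)).trans
    (X_congr Y (show (i : ℕ) + 1 = m + 1 by omega) rfl)

/-- Row n-1 of any `C` commuting with `A` vanishes except the corner. -/
private lemma rowlast_A {n : ℕ} (hn : 3 ≤ n) (C : Matrix (Fin n) (Fin n) S)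
    (hC : C * matA S n = matA S n * C) (j : Fin n) (hj : (j : ℕ) ≤ n - 2) :
    C ⟨n - 1, by omega⟩ j = 0 := by
  have h := entry_eq hC ⟨n - 1, by omega⟩ ⟨(j : ℕ) + 1, by have := j.isLt; omega⟩
  rw [mulA_colsucc' C _ _ (j : ℕ) j.isLt rfl, mulA_rowlast hn C _ _ rfl] at h
  exact h

/-- Row 0 of any `D` commuting with `B` vanishes off the corner. -/
private lemma row0_B {n : ℕ} (hn : 3 ≤ n) (D : Matrix (Fin n) (Fin n) S)
    (hD : D * matB S n = matB S n * D) (j : Fin n) (h1 : 1 ≤ (j : ℕ)) :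
    D ⟨0, by omega⟩ j = 0 := by
  have key : ∀ l : ℕ, ∀ hm : l + 1 < n, D ⟨0, by omega⟩ ⟨l + 1, hm⟩ = 0 := by
    intro l
    induction l with
    | zero =>
      intro hm
      have h := entry_eq hD ⟨0, by omega⟩ ⟨1, by omega⟩
      rw [mulB_col1 D _ _ rfl, mulB_row0 hn D _ _ rfl] at h
      exact h.symm
    | succ l ih =>
      intro hm
      have h := entry_eq hD ⟨0, by omega⟩ ⟨l + 1 + 1, hm⟩
      rw [mulB_colsucc' D _ _ (l + 1) (by omega) (by omega) rfl,
        mulB_row0 hn D _ _ rfl] at h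
      rw [ih (by omega)] at h
      exact h.symm
  have h := key ((j : ℕ) - 1) (by have := j.isLt; omega)
  rw [show (⟨(j : ℕ) - 1 + 1, by have := j.isLt; omega⟩ : Fin n) = j from Fin.ext (show (j : ℕ) - 1 + 1 = (j : ℕ) by omega)] at h
  exact h

/-- Row n-1 of any `D` commuting with `B` vanishes in columns 1..n-2. -/
private lemma rowlast_B {n : ℕ} (hn : 3 ≤ n) (D : Matrix (Fin n) (Fin n) S)
    (hD : D * matB S n = matB S n * D) (j : Fin n) (h1 : 1 ≤ (j : ℕ)) (h2 : (j : ℕ) ≤ n - 2) :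
    D ⟨n - 1, by omega⟩ j = 0 := by
  have h := entry_eq hD ⟨n - 1, by omega⟩ ⟨(j : ℕ) + 1, by have := j.isLt; omega⟩
  rw [mulB_colsucc' D _ _ (j : ℕ) j.isLt (by omega) rfl, mulB_rowlast hn D _ _ rfl] at h
  rw [row0_B hn D hD ⟨(j : ℕ) + 1, by have := j.isLt; omega⟩ (by simp)] at h
  exact h

end CG2
section CG3
variable {S : Type*} [CommSemiring S]

private lemma scalar_of_commA {n : ℕ} (hn : 3 ≤ n)
    (hanti : ∀ a b : S, a + b = 0 → a = 0 ∧ b = 0)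
    (C : Matrix (Fin n) (Fin n) S) (hC : C * matA S n = matA S n * C)
    (h01 : C ⟨0, by omega⟩ ⟨1, by omega⟩ = 0) :
    C = C ⟨0, by omega⟩ ⟨0, by omega⟩ • 1 := by
  have hrow : ∀ l : ℕ, ∀ hm : l + 1 < n,
      C ⟨0, by omega⟩ ⟨l + 1, hm⟩ = 0 ∧ (1 ≤ l → C ⟨1, by omega⟩ ⟨l + 1, hm⟩ = 0) := by
    intro l
    induction l with
    | zero => exact fun hm => ⟨h01, fun h => absurd h (by omega)⟩
    | succ l ih =>
      intro hm
      have h := entry_eq hC ⟨0, by omega⟩ ⟨l + 1 + 1, hm⟩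
      rw [mulA_colsucc' C _ _ (l + 1) (by omega) rfl, mulA_row0 hn C _ _ rfl,
        (ih (by omega)).1] at h
      have h2 := hanti _ _ h.symm
      exact ⟨h2.1, fun _ => h2.2⟩
  have hcc : C ⟨0, by omega⟩ ⟨0, by omega⟩ = C ⟨1, by omega⟩ ⟨1, by omega⟩ := by
    have h := entry_eq hC ⟨0, by omega⟩ ⟨1, by omega⟩
    rw [mulA_colsucc' C _ _ 0 (by omega) rfl, mulA_row0 hn C _ _ rfl, h01, zero_add] at h
    exact h
  have hcol0 : ∀ k m : ℕ, 1 ≤ m → m + k = n - 1 → ∀ hm : m < n,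
      C ⟨m, hm⟩ ⟨0, by omega⟩ = 0 := by
    intro k
    induction k with
    | zero =>
      intro m h1 h2 hm
      have hm' : m = n - 1 := by omega
      subst hm'
      exact rowlast_A hn C hC ⟨0, by omega⟩ (by simp)
    | succ k ih =>
      intro m h1 h2 hm
      have h := entry_eq hC ⟨m, hm⟩ ⟨0, by omega⟩
      rw [mulA_col0 C _ _ rfl, mulA_rowmid' C _ _ m (by omega) rfl (by omega) (by omega)] at h
      rw [ih (m + 1) (by omega) (by omega) (by omega)] at h
      exact h
  have hrows : ∀ l : ℕ, ∀ hm : l + 1 < n, ∀ j : Fin n,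
      C ⟨l + 1, hm⟩ j = if (j : ℕ) = l + 1 then C ⟨0, by omega⟩ ⟨0, by omega⟩ else 0 := by
    intro l
    induction l with
    | zero =>
      intro hm j
      rcases Nat.eq_zero_or_pos (j : ℕ) with hj | hj
      · rw [if_neg (by omega), show j = (⟨0, by omega⟩ : Fin n) from Fin.ext hj]
        exact hcol0 (n - 2) 1 (by omega) (by omega) (by omega)
      · rcases eq_or_lt_of_le (Nat.succ_le_of_lt hj) with hj1 | hj2
        · rw [if_pos (by omega), show j = (⟨1, by omega⟩ : Fin n) from Fin.ext hj1.symm]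
          exact hcc.symm
        · rw [if_neg (by omega),
            show j = (⟨((j : ℕ) - 1) + 1, by have := j.isLt; omega⟩ : Fin n) from
              Fin.ext (show (j : ℕ) = (j : ℕ) - 1 + 1 by omega)]
          exact (hrow ((j : ℕ) - 1) (by have := j.isLt; omega)).2 (by omega)
    | succ l ih =>
      intro hm j
      rcases Nat.eq_zero_or_pos (j : ℕ) with hj | hj
      · rw [if_neg (by omega), show j = (⟨0, by omega⟩ : Fin n) from Fin.ext hj]
        exact hcol0 (n - 1 - (l + 1 + 1)) (l + 1 + 1) (by omega) (by omega) hm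
      · have hjv : (j : ℕ) = ((j : ℕ) - 1) + 1 := by omega
        have h := entry_eq hC ⟨l + 1, by omega⟩ j
        rw [mulA_colsucc' C _ _ ((j : ℕ) - 1) (by have := j.isLt; omega) hjv,
          mulA_rowmid' C _ _ (l + 1) hm rfl (by omega) (by omega)] at h
        rw [ih (by omega) ⟨(j : ℕ) - 1, by have := j.isLt; omega⟩] at h
        rw [← h]
        simp only [Fin.val_mk]
        by_cases hc : (j : ℕ) = l + 1 + 1
        · rw [if_pos (by omega), if_pos hc]
        · rw [if_neg (by omega), if_neg hc]
  have hrows' : ∀ m : ℕ, 1 ≤ m → ∀ (hm : m < n) (j : Fin n),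
      C ⟨m, hm⟩ j = if (j : ℕ) = m then C ⟨0, by omega⟩ ⟨0, by omega⟩ else 0 := by
    intro m h1 hm j
    have e1 : C ⟨m, hm⟩ j = C ⟨m - 1 + 1, by omega⟩ j :=
      X_congr C (show m = m - 1 + 1 by omega) rfl
    rw [e1, hrows (m - 1) (by omega) j]
    by_cases hc : (j : ℕ) = m
    · rw [if_pos (by omega), if_pos hc]
    · rw [if_neg (by omega), if_neg hc]
  ext i j
  rw [Matrix.smul_apply, Matrix.one_apply]
  simp only [smul_eq_mul, mul_ite, mul_one, mul_zero]
  rcases Nat.eq_zero_or_pos (i : ℕ) with hi | hi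
  · rcases Nat.eq_zero_or_pos (j : ℕ) with hj | hj
    · rw [if_pos (Fin.ext (by omega)), show i = (⟨0, by omega⟩ : Fin n) from Fin.ext hi,
        show j = (⟨0, by omega⟩ : Fin n) from Fin.ext hj]
    · rw [if_neg (fun he => by have := congrArg Fin.val he; omega),
        show i = (⟨0, by omega⟩ : Fin n) from Fin.ext hi,
        show j = (⟨((j : ℕ) - 1) + 1, by have := j.isLt; omega⟩ : Fin n) from
          Fin.ext (show (j : ℕ) = (j : ℕ) - 1 + 1 by omega)]
      exact (hrow ((j : ℕ) - 1) (by have := j.isLt; omega)).1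
  · refine (hrows' (i : ℕ) hi i.isLt j).trans ?_
    by_cases hc : i = j
    · rw [if_pos (by have := congrArg Fin.val hc; omega), if_pos hc]
    · rw [if_neg (fun hh => hc (Fin.ext (by omega))), if_neg hc]

private lemma scalar_of_commB {n : ℕ} (hn : 3 ≤ n)
    (hanti : ∀ a b : S, a + b = 0 → a = 0 ∧ b = 0)
    (D : Matrix (Fin n) (Fin n) S) (hD : D * matB S n = matB S n * D)
    (h0 : D ⟨n - 1, by omega⟩ ⟨0, by omega⟩ = 0) :
    D = D ⟨0, by omega⟩ ⟨0, by omega⟩ • 1 := by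
  have hcol : ∀ k m : ℕ, 1 ≤ m → m + k = n - 1 → ∀ hm : m < n,
      D ⟨m, hm⟩ ⟨0, by omega⟩ = 0 ∧ (m ≤ n - 2 → D ⟨m, hm⟩ ⟨n - 1, by omega⟩ = 0) := by
    intro k
    induction k with
    | zero =>
      intro m h1 h2 hm
      have hm' : m = n - 1 := by omega
      subst hm'
      exact ⟨h0, fun hle => absurd hle (by omega)⟩
    | succ k ih =>
      intro m h1 h2 hm
      have h := entry_eq hD ⟨m, hm⟩ ⟨0, by omega⟩
      rw [mulB_col0 hn D _ _ rfl, mulB_rowmid' D _ _ m (by omega) rfl (by omega) (by omega)] at h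
      rw [(ih (m + 1) (by omega) (by omega) (by omega)).1] at h
      have h2' := hanti _ _ h
      exact ⟨h2'.1, fun _ => h2'.2⟩
  have hdd : D ⟨0, by omega⟩ ⟨0, by omega⟩ = D ⟨n - 1, by omega⟩ ⟨n - 1, by omega⟩ := by
    have h := entry_eq hD ⟨n - 1, by omega⟩ ⟨0, by omega⟩
    rw [mulB_col0 hn D _ _ rfl, mulB_rowlast hn D _ _ rfl, h0, zero_add] at h
    exact h.symm
  have hrows : ∀ k m : ℕ, 1 ≤ m → m + k = n - 1 → ∀ (hm : m < n) (j : Fin n),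
      D ⟨m, hm⟩ j = if (j : ℕ) = m then D ⟨0, by omega⟩ ⟨0, by omega⟩ else 0 := by
    intro k
    induction k with
    | zero =>
      intro m h1 h2 hm j
      have hm' : m = n - 1 := by omega
      subst hm'
      rcases Nat.eq_zero_or_pos (j : ℕ) with hj | hj
      · rw [if_neg (by omega), show j = (⟨0, by omega⟩ : Fin n) from Fin.ext hj]
        exact h0
      · by_cases hj2 : (j : ℕ) = n - 1
        · rw [if_pos hj2, show j = (⟨n - 1, by omega⟩ : Fin n) from Fin.ext hj2]
          exact hdd.symm
        · rw [if_neg hj2]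
          exact rowlast_B hn D hD j (by omega) (by have := j.isLt; omega)
    | succ k ih =>
      intro m h1 h2 hm j
      rcases Nat.eq_zero_or_pos (j : ℕ) with hj | hj
      · rw [if_neg (by omega), show j = (⟨0, by omega⟩ : Fin n) from Fin.ext hj]
        exact (hcol (k + 1) m h1 h2 hm).1
      · by_cases hj2 : (j : ℕ) = n - 1
        · rw [if_neg (by omega), show j = (⟨n - 1, by omega⟩ : Fin n) from Fin.ext hj2]
          exact (hcol (k + 1) m h1 h2 hm).2 (by omega)
        · have h := entry_eq hD ⟨m, hm⟩ ⟨(j : ℕ) + 1, by have := j.isLt; omega⟩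
          rw [mulB_colsucc' D _ _ (j : ℕ) j.isLt (by omega) rfl,
            mulB_rowmid' D _ _ m (by omega) rfl (by omega) (by omega)] at h
          rw [ih (m + 1) (by omega) (by omega) (by omega)
            ⟨(j : ℕ) + 1, by have := j.isLt; omega⟩] at h
          refine h.trans ?_
          simp only [Fin.val_mk]
          by_cases hc : (j : ℕ) = m
          · rw [if_pos (by omega), if_pos hc]
          · rw [if_neg (by omega), if_neg hc]
  ext i j
  rw [Matrix.smul_apply, Matrix.one_apply]
  simp only [smul_eq_mul, mul_ite, mul_one, mul_zero]
  rcases Nat.eq_zero_or_pos (i : ℕ) with hi | hi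
  · rcases Nat.eq_zero_or_pos (j : ℕ) with hj | hj
    · rw [if_pos (Fin.ext (by omega)), show i = (⟨0, by omega⟩ : Fin n) from Fin.ext hi,
        show j = (⟨0, by omega⟩ : Fin n) from Fin.ext hj]
    · rw [if_neg (fun he => by have := congrArg Fin.val he; omega),
        show i = (⟨0, by omega⟩ : Fin n) from Fin.ext hi]
      exact row0_B hn D hD j hj
  · refine (hrows (n - 1 - (i : ℕ)) (i : ℕ) hi (by have := i.isLt; omega) i.isLt j).trans ?_
    by_cases hc : i = j
    · rw [if_pos (by have := congrArg Fin.val hc; omega), if_pos hc]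
    · rw [if_neg (fun hh => hc (Fin.ext (by omega))), if_neg hc]

end CG3
section CG4
variable {S : Type*} [CommSemiring S]

private def matE (S : Type*) [CommSemiring S] (n : ℕ) : Matrix (Fin n) (Fin n) S :=
  fun i j => if (i : ℕ) = 0 ∧ (j : ℕ) = 1 then 1 else 0

private lemma notCentral_aux {n : ℕ} (hn : 3 ≤ n) [Nontrivial S]
    (M : Matrix (Fin n) (Fin n) S)
    (h00 : M ⟨0, by omega⟩ ⟨0, by omega⟩ = 1) (h11 : M ⟨1, by omega⟩ ⟨1, by omega⟩ = 0) :
    ¬ ∀ Y, M * Y = Y * M := by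
  intro hall
  have h := entry_eq (hall (matE S n)) ⟨0, by omega⟩ ⟨1, by omega⟩
  have hL : (M * matE S n) ⟨0, by omega⟩ ⟨1, by omega⟩ = 1 := by
    rw [Matrix.mul_apply, sum_single _ ⟨0, by omega⟩ (fun k hk => by
      have hk' : (k : ℕ) ≠ 0 := fin_ne (by omega) hk
      have hz : matE S n k ⟨1, by omega⟩ = 0 := by
        unfold matE; rw [if_neg]; simp only [Fin.val_mk]; omega
      simp only [hz, mul_zero])]
    have h1 : matE S n ⟨0, by omega⟩ ⟨1, by omega⟩ = 1 := by
      unfold matE; rw [if_pos ⟨rfl, rfl⟩]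
    simp only [h1, mul_one, h00]
  have hR : (matE S n * M) ⟨0, by omega⟩ ⟨1, by omega⟩ = 0 := by
    rw [Matrix.mul_apply, sum_single _ ⟨1, by omega⟩ (fun k hk => by
      have hk' : (k : ℕ) ≠ 1 := fin_ne (by omega) hk
      have hz : matE S n ⟨0, by omega⟩ k = 0 := by
        unfold matE; rw [if_neg]; simp only [Fin.val_mk]; omega
      simp only [hz, zero_mul])]
    have h1 : matE S n ⟨0, by omega⟩ ⟨1, by omega⟩ = 1 := by
      unfold matE; rw [if_pos ⟨rfl, rfl⟩]
    simp only [h1, one_mul, h11]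
  rw [hL, hR] at h
  exact one_ne_zero h

private lemma no_middle {n : ℕ} (hn : 3 ≤ n)
    (hentire : ∀ a b : S, a * b = 0 → a = 0 ∨ b = 0)
    (hanti : ∀ a b : S, a + b = 0 → a = 0 ∧ b = 0)
    (C D : Matrix (Fin n) (Fin n) S)
    (hC : C * matA S n = matA S n * C) (hD : D * matB S n = matB S n * D)
    (hCD : C * D = D * C)
    (hCnc : ¬ ∀ Y, C * Y = Y * C) (hDnc : ¬ ∀ Y, D * Y = Y * D) : False := by
  have e1 : (C * D) ⟨n - 1, by omega⟩ ⟨1, by omega⟩ = 0 := by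
    rw [Matrix.mul_apply]
    refine Finset.sum_eq_zero (fun k _ => ?_)
    by_cases hk : (k : ℕ) = n - 1
    · have hz : D ⟨n - 1, by omega⟩ ⟨1, by omega⟩ = 0 :=
        rowlast_B hn D hD ⟨1, by omega⟩ (show (1 : ℕ) ≤ 1 by omega)
          (show (1 : ℕ) ≤ n - 2 by omega)
      rw [show k = (⟨n - 1, by omega⟩ : Fin n) from Fin.ext hk]
      simp only [hz, mul_zero]
    · have hz : C ⟨n - 1, by omega⟩ k = 0 :=
        rowlast_A hn C hC k (by have := k.isLt; omega)
      simp only [hz, zero_mul]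
  have e2 : (D * C) ⟨n - 1, by omega⟩ ⟨1, by omega⟩
      = D ⟨n - 1, by omega⟩ ⟨0, by omega⟩ * C ⟨0, by omega⟩ ⟨1, by omega⟩ := by
    rw [Matrix.mul_apply, sum_single _ ⟨0, by omega⟩ (fun k hk => by
      have hk0 : (k : ℕ) ≠ 0 := fin_ne (by omega) hk
      by_cases hk1 : (k : ℕ) = n - 1
      · have hz : C ⟨n - 1, by omega⟩ ⟨1, by omega⟩ = 0 :=
          rowlast_A hn C hC ⟨1, by omega⟩ (show (1 : ℕ) ≤ n - 2 by omega)
        rw [show k = (⟨n - 1, by omega⟩ : Fin n) from Fin.ext hk1]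
        simp only [hz, mul_zero]
      · have hz : D ⟨n - 1, by omega⟩ k = 0 :=
          rowlast_B hn D hD k (by omega) (by have := k.isLt; omega)
        simp only [hz, zero_mul])]
  have h := (entry_eq hCD ⟨n - 1, by omega⟩ ⟨1, by omega⟩).symm.trans e1
  rw [e2] at h
  rcases hentire _ _ h with h0 | h0
  · refine hDnc (fun Y => ?_)
    rw [scalar_of_commB hn hanti D hD h0, smul_mul_assoc, one_mul, mul_smul_comm, mul_one]
  · refine hCnc (fun Y => ?_)
    rw [scalar_of_commA hn hanti C hC h0, smul_mul_assoc, one_mul, mul_smul_comm, mul_one]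

end CG4

theorem diam_commGraph_ge_four_entire_antineg (S : Type*) [CommSemiring S] [Nontrivial S]
    (hentire : ∀ a b : S, a * b = 0 → a = 0 ∨ b = 0)
    (hanti : ∀ a b : S, a + b = 0 → a = 0 ∧ b = 0)
    (n : ℕ) (hn : 3 ≤ n) :
    4 ≤ (commGraph S n).ediam := by
  have hA00 : matA S n ⟨0, by omega⟩ ⟨0, by omega⟩ = 1 := by
    unfold matA; rw [if_pos (Or.inl ⟨rfl, rfl⟩)]
  have hA11 : matA S n ⟨1, by omega⟩ ⟨1, by omega⟩ = 0 := by
    unfold matA; rw [if_neg]; simp only [Fin.val_mk]; omega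
  have hB00 : matB S n ⟨0, by omega⟩ ⟨0, by omega⟩ = 1 := by
    unfold matB; rw [if_pos (Or.inl ⟨rfl, rfl⟩)]
  have hB11 : matB S n ⟨1, by omega⟩ ⟨1, by omega⟩ = 0 := by
    unfold matB; rw [if_neg]; simp only [Fin.val_mk]; omega
  have hAnc : ¬ ∀ Y, matA S n * Y = Y * matA S n := notCentral_aux hn _ hA00 hA11
  have hBnc : ¬ ∀ Y, matB S n * Y = Y * matB S n := notCentral_aux hn _ hB00 hB11
  refine le_trans ?_ (SimpleGraph.edist_le_ediam
    (u := ⟨matA S n, hAnc⟩) (v := ⟨matB S n, hBnc⟩))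
  by_contra hlt
  push_neg at hlt
  have hne : (commGraph S n).edist ⟨matA S n, hAnc⟩ ⟨matB S n, hBnc⟩ ≠ ⊤ := by
    intro ht; rw [ht] at hlt; exact not_top_lt hlt
  obtain ⟨p, hp⟩ := SimpleGraph.exists_walk_of_edist_ne_top hne
  have hlen : p.length ≤ 3 := by
    have h4 : ((p.length : ℕ∞)) < 4 := by rw [hp]; exact hlt
    have h4' : p.length < 4 := by exact_mod_cast h4
    omega
  have key := no_middle (S := S) hn hentire hanti
  rcases hL : p.length with _ | _ | _ | k
  · have huv := p.eq_of_length_eq_zero hL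
    have hAB : matA S n = matB S n := congrArg Subtype.val huv
    exact key (matA S n) (matA S n) rfl (by rw [← hAB]) rfl hAnc hAnc
  · have hadj := p.adj_getVert_succ (by omega : 0 < p.length)
    rw [p.getVert_zero] at hadj
    have hv : p.getVert 1 = ⟨matB S n, hBnc⟩ := by
      have hgl := p.getVert_length; rw [hL] at hgl; exact hgl
    rw [hv] at hadj
    obtain ⟨-, hcomm⟩ : _ ≠ _ ∧ _ := hadj
    exact key (matB S n) (matA S n) hcomm.symm hcomm hcomm.symm hBnc hAnc
  · have hadj0 := p.adj_getVert_succ (by omega : 0 < p.length)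
    have hadj1 := p.adj_getVert_succ (by omega : 1 < p.length)
    rw [p.getVert_zero] at hadj0
    have hv : p.getVert 2 = ⟨matB S n, hBnc⟩ := by
      have hgl := p.getVert_length; rw [hL] at hgl; exact hgl
    rw [hv] at hadj1
    obtain ⟨-, h0⟩ : _ ≠ _ ∧ _ := hadj0
    obtain ⟨-, h1⟩ : _ ≠ _ ∧ _ := hadj1
    exact key (p.getVert 1).1 (p.getVert 1).1 h0.symm h1 rfl (p.getVert 1).2 (p.getVert 1).2
  · have hk : k = 0 := by omega
    subst hk
    have hadj0 := p.adj_getVert_succ (by omega : 0 < p.length)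
    have hadj1 := p.adj_getVert_succ (by omega : 1 < p.length)
    have hadj2 := p.adj_getVert_succ (by omega : 2 < p.length)
    rw [p.getVert_zero] at hadj0
    have hv : p.getVert 3 = ⟨matB S n, hBnc⟩ := by
      have hgl := p.getVert_length; rw [hL] at hgl; exact hgl
    rw [hv] at hadj2
    obtain ⟨-, h0⟩ : _ ≠ _ ∧ _ := hadj0
    obtain ⟨-, h1⟩ : _ ≠ _ ∧ _ := hadj1
    obtain ⟨-, h2⟩ : _ ≠ _ ∧ _ := hadj2
    exact key (p.getVert 1).1 (p.getVert 2).1 h0.symm h2 h1 (p.getVert 1).2 (p.getVert 2).2
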